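/- Let A be an N×N integer matrix and let F : (ℂ^×)^N → (ℂ^×)^N be the endomorphism of the torus given by F(z_1,…,z_N) = (Π_i z_i^{A_{i,1}}, …, Π_i z_i^{A_{i,N}}). For every n ≥ 1 such that det(A^n − Id) ≠ 0, the set of fixed points of the n-fold iterate F^n is finite and has exactly |det(A^n − Id)| elements. -/

import Mathlib

open BigOperators


open Matrix

/-- The index of the range of an integer matrix (as a subgroup of `ℤᴺ`)
equals `|det|`, when the determinant is nonzero. -/
lemma index_range_toLin' {N : ℕ} (B : Matrix (Fin N) (Fin N) ℤ) (hB : B.det ≠ 0) :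
    (LinearMap.range (Matrix.toLin' B)).toAddSubgroup.index = B.det.natAbs := by
  classical
  have hinj : Function.Injective (Matrix.toLin' B) := by
    intro x y hxy
    by_contra hne
    refine hB (Matrix.exists_mulVec_eq_zero_iff.mp ⟨x - y, sub_ne_zero.mpr hne, ?_⟩)
    have h : B *ᵥ x = B *ᵥ y := by simpa [Matrix.toLin'_apply] using hxy
    simp [Matrix.mulVec_sub, h]
  set N' : Submodule ℤ (Fin N → ℤ) := LinearMap.range (Matrix.toLin' B) with hN'
  let eM : (Fin N → ℤ) ≃ₗ[ℤ] N' := LinearEquiv.ofInjective _ hinj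
  obtain ⟨m, snf⟩ := N'.smithNormalForm (Pi.basisFun ℤ (Fin N))
  have hm : m = N := by
    simpa using Fintype.card_congr (snf.bN.indexEquiv ((Pi.basisFun ℤ (Fin N)).map eM))
  subst hm
  -- the index is the product of the diagonal entries
  have hidx : N'.toAddSubgroup.index = ∏ i, (snf.a i).natAbs := by
    rw [snf.toAddSubgroup_index_eq_pow_mul_prod]
    simp [Ideal.span_singleton_toAddSubgroup_eq_zmultiples, Int.index_zmultiples]
  rw [hidx]
  -- the determinant is the product of the diagonal entries up to sign
  let σ : Fin m ≃ Fin m := Equiv.ofBijective snf.f (Finite.injective_iff_bijective.mp snf.f.injective)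
  let e' : (Fin m → ℤ) ≃ₗ[ℤ] N' := snf.bM.equiv snf.bN σ.symm
  let t : (Fin m → ℤ) →ₗ[ℤ] (Fin m → ℤ) := N'.subtype ∘ₗ (e' : (Fin m → ℤ) →ₗ[ℤ] N')
  have ht : ∀ i, t (snf.bM i) = snf.a (σ.symm i) • snf.bM i := by
    intro i
    have h1 : e' (snf.bM i) = snf.bN (σ.symm i) := by simp [e']
    have h2 := snf.snf (σ.symm i)
    have h3 : snf.f (σ.symm i) = i := σ.apply_symm_apply i
    rw [h3] at h2
    show (e' (snf.bM i) : Fin m → ℤ) = _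
    rw [h1, h2]
  have htm : LinearMap.toMatrix snf.bM snf.bM t = Matrix.diagonal (fun i => snf.a (σ.symm i)) := by
    ext i j
    rw [LinearMap.toMatrix_apply, ht, _root_.map_smul, Module.Basis.repr_self]
    simp [Matrix.diagonal, Finsupp.single_apply, eq_comm]
    rcases eq_or_ne i j with rfl | h
    · simp
    · simp [h, Ne.symm h]
  have hdt : LinearMap.det t = ∏ i, snf.a (σ.symm i) := by
    rw [← LinearMap.det_toMatrix snf.bM, htm, Matrix.det_diagonal]
  have h1 : N'.subtype ∘ₗ (eM : (Fin m → ℤ) →ₗ[ℤ] N') = Matrix.toLin' B :=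
    LinearMap.ext fun x => rfl
  have hassoc : Associated (LinearMap.det (Matrix.toLin' B)) (LinearMap.det t) := by
    rw [← h1]
    exact LinearMap.associated_det_comp_equiv _ _ _
  calc ∏ i, (snf.a i).natAbs = ∏ i, (snf.a (σ.symm i)).natAbs := (Equiv.prod_comp σ.symm _).symm
    _ = (∏ i, snf.a (σ.symm i)).natAbs := (map_prod Int.natAbsHom _ _).symm
    _ = (LinearMap.det t).natAbs := by rw [hdt]
    _ = (LinearMap.det (Matrix.toLin' B)).natAbs :=
        (Int.natAbs_eq_iff_associated.mpr hassoc).symm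
    _ = B.det.natAbs := by rw [LinearMap.det_toLin']

lemma card_torus_ker {N : ℕ} (D : Matrix (Fin N) (Fin N) ℤ) (hD : D.det ≠ 0) :
    Nat.card {z : Fin N → ℂˣ | ∀ j, ∏ i, z i ^ D i j = 1} = D.det.natAbs ∧
    {z : Fin N → ℂˣ | ∀ j, ∏ i, z i ^ D i j = 1}.Finite := by
  classical
  set T : Set (Fin N → ℂˣ) := {z | ∀ j, ∏ i, z i ^ D i j = 1} with hT
  set C : Matrix (Fin N) (Fin N) ℂ := Dᵀ.map (Int.cast) with hC
  have hCdet : C.det ≠ 0 := by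
    have : C.det = ((Dᵀ.det : ℤ) : ℂ) := (RingHom.map_det (Int.castRingHom ℂ) Dᵀ).symm
    rw [this]
    simpa [Matrix.det_transpose] using hD
  have hCu : IsUnit C.det := isUnit_iff_ne_zero.mpr hCdet
  have hCC : ∀ x : Fin N → ℂ, C *ᵥ (C⁻¹ *ᵥ x) = x := by
    intro x; rw [Matrix.mulVec_mulVec, Matrix.mul_nonsing_inv _ hCu, Matrix.one_mulVec]
  have hC'C : ∀ x : Fin N → ℂ, C⁻¹ *ᵥ (C *ᵥ x) = x := by
    intro x; rw [Matrix.mulVec_mulVec, Matrix.nonsing_inv_mul _ hCu, Matrix.one_mulVec]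
  set c : ℂ := 2 * Real.pi * Complex.I with hc
  have hc0 : c ≠ 0 := by
    simp [hc, Real.pi_ne_zero, Complex.I_ne_zero, Complex.ofReal_ne_zero]
  set ic : (Fin N → ℤ) → (Fin N → ℂ) := fun v k => ((v k : ℤ) : ℂ) with hic
  set u : (Fin N → ℤ) → (Fin N → ℂ) := fun v => C⁻¹ *ᵥ ic v with hu
  set φ : (Fin N → ℤ) → (Fin N → ℂˣ) :=
    fun v i => Units.mk0 (Complex.exp (c * u v i)) (Complex.exp_ne_zero _) with hφ
  have hcast : ∀ (k : Fin N → ℤ), ic (Dᵀ *ᵥ k) = C *ᵥ ic k := by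
    intro k
    funext j
    exact RingHom.map_mulVec (Int.castRingHom ℂ) Dᵀ k j
  -- the key linear-algebra identity
  have hval : ∀ (v : Fin N → ℤ) (j : Fin N), ∑ i, (D i j : ℂ) * u v i = ic v j := by
    intro v j
    have h1 : ∑ i, (D i j : ℂ) * u v i = (C *ᵥ u v) j := by
      simp [Matrix.mulVec, dotProduct, hC, Matrix.map_apply, Matrix.transpose_apply]
    rw [h1]
    show (C *ᵥ (C⁻¹ *ᵥ ic v)) j = ic v j
    rw [hCC]
  -- membership
  have hmem : ∀ v, φ v ∈ T := by
    intro v j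
    ext
    push_cast [Units.coe_prod, Units.val_zpow_eq_zpow_val, hφ, Units.val_mk0, Units.val_one]
    have h2 : ∀ i, Complex.exp (c * u v i) ^ (D i j : ℤ) =
        Complex.exp ((D i j : ℂ) * (c * u v i)) := by
      intro i; rw [Complex.exp_int_mul]
    rw [Finset.prod_congr rfl fun i _ => h2 i, ← Complex.exp_sum]
    have h3 : ∑ i, (D i j : ℂ) * (c * u v i) = c * ∑ i, (D i j : ℂ) * u v i := by
      rw [Finset.mul_sum]; exact Finset.sum_congr rfl fun i _ => by ring
    rw [h3, hval]
    exact Complex.exp_eq_one_iff.mpr ⟨v j, by push_cast [hic, hc]; ring⟩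
  -- kernel
  have hker : ∀ v, φ v = 1 ↔ v ∈ LinearMap.range (Matrix.toLin' Dᵀ) := by
    intro v
    constructor
    · intro h
      have h1 : ∀ i, Complex.exp (c * u v i) = 1 := by
        intro i
        have := congr_fun h i
        simpa [hφ, Units.ext_iff] using this
      have h2 : ∀ i, ∃ k : ℤ, u v i = (k : ℂ) := by
        intro i
        obtain ⟨k, hk⟩ := Complex.exp_eq_one_iff.mp (h1 i)
        refine ⟨k, mul_left_cancel₀ hc0 ?_⟩
        rw [hk, hc]; push_cast; ring
      choose k hk using h2
      refine ⟨k, ?_⟩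
      have h4 : C⁻¹ *ᵥ ic v = ic k := funext hk
      have h5 : ic v = ic (Dᵀ *ᵥ k) := by
        rw [hcast k, ← h4, hCC]
      funext j
      have h6 := congr_fun h5 j
      simp only [hic] at h6
      rw [Matrix.toLin'_apply]
      exact_mod_cast h6.symm
    · rintro ⟨k, rfl⟩
      have hk : u (Matrix.toLin' Dᵀ k) = ic k := by
        show C⁻¹ *ᵥ ic (Matrix.toLin' Dᵀ k) = ic k
        have : ic (Matrix.toLin' Dᵀ k) = C *ᵥ ic k := by
          rw [Matrix.toLin'_apply]; exact hcast k
        rw [this, hC'C]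
      funext i
      ext
      simp only [hφ, Units.val_mk0, Units.val_one, Pi.one_apply, hk]
      exact Complex.exp_eq_one_iff.mpr ⟨k i, by push_cast [hic, hc]; ring⟩
  -- additivity
  have hadd : ∀ v w, φ (v + w) = φ v * φ w := by
    intro v w
    funext i
    ext
    have h1 : ic (v + w) = ic v + ic w := by funext j; push_cast [hic]; simp
    simp only [hφ, Units.val_mk0, Pi.mul_apply, Units.val_mul]
    show Complex.exp (c * (C⁻¹ *ᵥ ic (v + w)) i) = _
    rw [h1, Matrix.mulVec_add]
    simp [mul_add, Complex.exp_add]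
    rfl
  -- surjectivity
  have hsurj : ∀ z ∈ T, ∃ v, φ v = z := by
    intro z hz
    have hw : ∀ i, ∃ w : ℂ, Complex.exp w = (z i : ℂ) := by
      intro i
      have h1 : ((z i : ℂ)) ∈ Set.range Complex.exp := by
        rw [Complex.range_exp]; exact (z i).ne_zero
      exact h1.imp fun w hw => hw
    choose w hwz using hw
    have hcond : ∀ j, ∃ m : ℤ, (C *ᵥ w) j = (m : ℂ) * c := by
      intro j
      have h1 : Complex.exp (∑ i, (D i j : ℂ) * w i) = 1 := by
        rw [Complex.exp_sum]
        have h0 : ∀ i, Complex.exp ((D i j : ℂ) * w i) = (z i : ℂ) ^ (D i j : ℤ) := by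
          intro i; rw [Complex.exp_int_mul, hwz]
        rw [Finset.prod_congr rfl fun i _ => h0 i]
        have hzj := congr_arg (Units.val) (hz j)
        simp only [Units.coe_prod, Units.val_zpow_eq_zpow_val, Units.val_one] at hzj
        exact hzj
      obtain ⟨m, hm⟩ := Complex.exp_eq_one_iff.mp h1
      refine ⟨m, ?_⟩
      have h2 : (C *ᵥ w) j = ∑ i, (D i j : ℂ) * w i := by
        simp [Matrix.mulVec, dotProduct, hC, Matrix.map_apply, Matrix.transpose_apply]
      rw [h2, hm, hc]
    choose m hm using hcond
    refine ⟨m, ?_⟩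
    have hmw : ∀ i, c * u m i = w i := by
      have h1 : ic m = c⁻¹ • (C *ᵥ w) := by
        funext j
        simp only [Pi.smul_apply, smul_eq_mul, hm j, hic]
        field_simp
      have h2 : u m = c⁻¹ • w := by
        show C⁻¹ *ᵥ ic m = c⁻¹ • w
        rw [h1, Matrix.mulVec_smul, hC'C]
      intro i
      rw [h2]
      simp only [Pi.smul_apply, smul_eq_mul]
      field_simp
    funext i
    ext
    simp only [hφ, Units.val_mk0, hmw, hwz]
  -- packaging: T is the range of a group homomorphism
  let φ' : (Fin N → ℤ) →+ Additive (Fin N → ℂˣ) :=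
    AddMonoidHom.mk' (fun v => Additive.ofMul (φ v)) (by
      intro v w
      simp only [hadd]
      rfl)
  have hrange : T = Set.range φ := by
    apply Set.eq_of_subset_of_subset
    · intro z hz
      obtain ⟨v, hv⟩ := hsurj z hz
      exact ⟨v, hv⟩
    · rintro _ ⟨v, rfl⟩
      exact hmem v
  have hrange' : (Set.range ⇑φ') = (⇑Additive.ofMul) '' (Set.range φ) := by
    rw [← Set.range_comp]
    rfl
  have hkerφ' : φ'.ker = (LinearMap.range (Matrix.toLin' Dᵀ)).toAddSubgroup := by
    ext v
    simp only [AddMonoidHom.mem_ker, Submodule.mem_toAddSubgroup]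
    rw [← hker v]
    constructor
    · intro h
      exact Additive.ofMul.injective h
    · intro h
      rw [show φ' v = Additive.ofMul (φ v) from rfl, h]
      rfl
  have hcard : Nat.card T = D.det.natAbs := by
    calc Nat.card T = Nat.card (Set.range φ) := by rw [hrange]
      _ = Nat.card ((⇑Additive.ofMul) '' (Set.range φ) : Set (Additive (Fin N → ℂˣ))) :=
          Nat.card_congr (Equiv.image Additive.ofMul _)
      _ = Nat.card (Set.range ⇑φ') := by rw [hrange']
      _ = Nat.card ((Fin N → ℤ) ⧸ φ'.ker) :=
          (Nat.card_congr (QuotientAddGroup.quotientKerEquivRange φ').toEquiv).symm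
      _ = φ'.ker.index := (AddSubgroup.index_eq_card _).symm
      _ = (LinearMap.range (Matrix.toLin' Dᵀ)).toAddSubgroup.index := by rw [hkerφ']
      _ = Dᵀ.det.natAbs := index_range_toLin' Dᵀ (by simpa [Matrix.det_transpose] using hD)
      _ = D.det.natAbs := by rw [Matrix.det_transpose]
  refine ⟨hcard, ?_⟩
  rw [← Set.finite_coe_iff]
  have hne : Nat.card T ≠ 0 := by
    rw [hcard]
    simpa using hD
  exact (Nat.card_ne_zero.mp hne).2

private lemma zpow_finset_sum {G : Type*} [CommGroup G] (u : G) (s : Finset (Fin n))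
    (f : Fin n → ℤ) : u ^ (∑ i ∈ s, f i) = ∏ i ∈ s, u ^ f i := by
  classical
  induction s using Finset.induction_on with
  | empty => simp
  | insert _ _ h ih => rw [Finset.sum_insert h, Finset.prod_insert h, _root_.zpow_add, ih]


/-- The number of fixed points of the `n`-th iterate of the torus endomorphism attached
to an integer matrix `A` equals `|det(Aⁿ - Id)|`, whenever this determinant is
nonzero. -/
theorem torus_endomorphism_card_fixedPoints (N : ℕ) (A : Matrix (Fin N) (Fin N) ℤ)
    (F : (Fin N → ℂˣ) → (Fin N → ℂˣ))
    (hF : ∀ (z : Fin N → ℂˣ) (j : Fin N), F z j = ∏ i : Fin N, z i ^ A i j)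
    (n : ℕ) (hn : 1 ≤ n) (hdet : (A ^ n - 1).det ≠ 0) :
    {z : Fin N → ℂˣ | F^[n] z = z}.Finite ∧
    Nat.card {z : Fin N → ℂˣ | F^[n] z = z} = (A ^ n - 1).det.natAbs := by
  classical
  have hone : ∀ (z : Fin N → ℂˣ) (j : Fin N),
      ∏ i : Fin N, z i ^ ((1 : Matrix (Fin N) (Fin N) ℤ) i j) = z j := by
    intro z j
    have h : ∀ i, z i ^ ((1 : Matrix (Fin N) (Fin N) ℤ) i j) = if i = j then z i else 1 := by
      intro i
      by_cases hij : i = j <;> simp [Matrix.one_apply, hij]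
    rw [Finset.prod_congr rfl fun i _ => h i]
    simp
  have hiter : ∀ (m : ℕ) (z : Fin N → ℂˣ) (j : Fin N),
      F^[m] z j = ∏ i : Fin N, z i ^ ((A ^ m) i j) := by
    intro m
    induction m with
    | zero => intro z j; simpa using (hone z j).symm
    | succ m ih =>
      intro z j
      rw [Function.iterate_succ_apply', hF, pow_succ]
      calc ∏ i, (F^[m] z) i ^ A i j
          = ∏ i, (∏ k, z k ^ ((A ^ m) k i)) ^ A i j := by
            exact Finset.prod_congr rfl fun i _ => by rw [ih z i]
        _ = ∏ i, ∏ k, z k ^ ((A ^ m) k i * A i j) := by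
            refine Finset.prod_congr rfl fun i _ => ?_
            rw [← Finset.prod_zpow]
            exact Finset.prod_congr rfl fun k _ => by rw [← _root_.zpow_mul]
        _ = ∏ k, ∏ i, z k ^ ((A ^ m) k i * A i j) := Finset.prod_comm
        _ = ∏ k, z k ^ ((A ^ m * A) k j) := by
            refine Finset.prod_congr rfl fun k _ => ?_
            rw [Matrix.mul_apply, zpow_finset_sum]
  have hsets : {z : Fin N → ℂˣ | F^[n] z = z} =
      {z : Fin N → ℂˣ | ∀ j, ∏ i, z i ^ ((A ^ n - 1) i j) = 1} := by
    ext z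
    simp only [Set.mem_setOf_eq, funext_iff]
    constructor
    · intro h j
      have h1 := h j
      rw [hiter n z j] at h1
      have h2 : ∀ i, z i ^ ((A ^ n - 1) i j) =
          z i ^ ((A ^ n) i j) * (z i ^ ((1 : Matrix (Fin N) (Fin N) ℤ) i j))⁻¹ := by
        intro i
        rw [Matrix.sub_apply, _root_.zpow_sub]
      rw [Finset.prod_congr rfl fun i _ => h2 i, Finset.prod_mul_distrib,
        Finset.prod_inv_distrib, hone, h1, mul_inv_cancel]
    · intro h j
      have h1 := h j
      have h2 : ∀ i, z i ^ ((A ^ n - 1) i j) =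
          z i ^ ((A ^ n) i j) * (z i ^ ((1 : Matrix (Fin N) (Fin N) ℤ) i j))⁻¹ := by
        intro i
        rw [Matrix.sub_apply, _root_.zpow_sub]
      rw [Finset.prod_congr rfl fun i _ => h2 i, Finset.prod_mul_distrib,
        Finset.prod_inv_distrib, hone, mul_inv_eq_one] at h1
      rw [hiter n z j, h1]
  rw [hsets]
  obtain ⟨hcard, hfin⟩ := card_torus_ker (A ^ n - 1) hdet
  exact ⟨hfin, hcard⟩
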